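/- Let N = n², m ≥ 1, k ≥ 1, and let Z be the number of edges of the support of a uniformly random bipartite multigraph from B'(n,m). Then E[Z^k] = (Nm/(N+m−1)) · E[(Y+1)^{k−1}], where Y is a hypergeometric random variable with parameters H(N+m−2, N−1, m−1), i.e., Pr[Y = r] = binomial(N−1, r) · binomial(m−1, m−1−r) / binomial(N+m−2, m−1). -/

import Mathlib

open scoped Classical

/-- The finite set `B'(n,m)` of all bipartite multigraphs on the vertex set of the
complete bipartite graph `K_{n,n}` with total edge multiplicity `m`: a multigraph is
a multiplicity function on the `n²` possible edges, which we encode as the pairs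
`(i,j)` (the edge joining left-vertex `i` to right-vertex `j`). -/
def multigraphs (n m : ℕ) : Finset (Fin n × Fin n → ℕ) :=
  (Fintype.piFinset fun _ : Fin n × Fin n => Finset.range (m + 1)).filter
    fun f => ∑ e, f e = m

/-- The number of edges of the support of a multigraph, i.e. the number of edges
with positive multiplicity. -/
def suppSize {n : ℕ} (f : Fin n × Fin n → ℕ) : ℕ :=
  (Finset.univ.filter fun e => 0 < f e).card


open Finset

variable {α : Type*} [Fintype α] [DecidableEq α]

def sbSet (α : Type*) [Fintype α] [DecidableEq α] (t : ℕ) : Finset (α → ℕ) :=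
  (Fintype.piFinset fun _ : α => Finset.range (t + 1)).filter fun f => ∑ i, f i = t

private lemma mem_sbSet {t : ℕ} {f : α → ℕ} : f ∈ sbSet α t ↔ ∑ i, f i = t := by
  constructor
  · exact fun h => (Finset.mem_filter.1 h).2
  · intro h
    refine Finset.mem_filter.2 ⟨Fintype.mem_piFinset.2 fun i => ?_, h⟩
    rw [Finset.mem_range, Nat.lt_succ_iff, ← h]
    exact Finset.single_le_sum (fun j _ => Nat.zero_le _) (Finset.mem_univ i)

private lemma sbSet_card (t : ℕ) : (sbSet α t).card = (Fintype.card α + t - 1).choose t := by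
  rw [← Sym.card_sym_eq_choose]
  apply Finset.card_eq_of_equiv_fintype
  refine
    { toFun := fun f => ⟨∑ i, f.1 i • ({i} : Multiset α), by
        simp [mem_sbSet.1 f.2]⟩
      invFun := fun s => ⟨fun i => s.1.count i, mem_sbSet.2 (by
        rw [Multiset.sum_count_eq_card (fun a _ => Finset.mem_univ a), s.2])⟩
      left_inv := fun f => by
        apply Subtype.ext; funext j
        simp [Multiset.count_sum', Multiset.count_singleton]
      right_inv := fun s => by
        apply Subtype.ext
        apply Multiset.ext.2; intro j
        simp [Multiset.count_sum', Multiset.count_singleton] }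

private lemma supp_le {f : α → ℕ} : (univ.filter fun e => 0 < f e).card ≤ ∑ i, f i := by
  calc (univ.filter fun e => 0 < f e).card
      = ∑ _e ∈ univ.filter fun e => 0 < f e, 1 := by rw [Finset.sum_const, smul_eq_mul, mul_one]
    _ ≤ ∑ e ∈ univ.filter fun e => 0 < f e, f e :=
        Finset.sum_le_sum fun e he => (Finset.mem_filter.1 he).2
    _ ≤ ∑ i, f i := Finset.sum_le_sum_of_subset (Finset.filter_subset _ _)

private lemma fib_card (m : ℕ) (A : Finset α) (hA : A.card ≤ m) :
    ((sbSet α m).filter fun f => univ.filter (fun e => 0 < f e) = A).card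
      = (m - 1).choose (m - A.card) := by
  have hAA : A.card + (m - A.card) - 1 = m - 1 := by omega
  have key : ((sbSet α m).filter fun f => univ.filter (fun e => 0 < f e) = A).card
      = (sbSet (↥A) (m - A.card)).card := by
    refine Finset.card_bij' (fun f _ => fun a : ↥A => f ↑a - 1)
      (fun g _ => fun e => if h : e ∈ A then g ⟨e, h⟩ + 1 else 0) ?hi ?hj ?li ?ri
    case hi =>
      intro f hf
      obtain ⟨hf1, hf2⟩ := Finset.mem_filter.1 hf
      replace hf1 := mem_sbSet.1 hf1
      have hpos : ∀ e ∈ A, 1 ≤ f e := fun e he => by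
        have : e ∈ univ.filter fun e => 0 < f e := hf2 ▸ he
        exact (Finset.mem_filter.1 this).2
      have h0 : ∀ e ∉ A, f e = 0 := fun e he => by
        by_contra h
        exact he (hf2 ▸ Finset.mem_filter.2 ⟨Finset.mem_univ e, Nat.pos_of_ne_zero h⟩)
      have hsumA : ∑ e ∈ A, f e = m := by
        rw [← hf1]
        exact Finset.sum_subset (Finset.subset_univ A) fun e _ he => h0 e he
      refine mem_sbSet.2 ?_
      have h1 : ∑ a : ↥A, (f ↑a - 1) = ∑ e ∈ A, (f e - 1) := Finset.sum_coe_sort A (fun e => f e - 1)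
      have h2 : ∑ e ∈ A, (f e - 1) + A.card = m := by
        rw [← hsumA, Finset.card_eq_sum_ones, ← Finset.sum_add_distrib]
        exact Finset.sum_congr rfl fun e he => Nat.sub_add_cancel (hpos e he)
      show ∑ a : ↥A, (f ↑a - 1) = m - A.card
      omega
    case hj =>
      intro g hg
      replace hg := mem_sbSet.1 hg
      refine Finset.mem_filter.2 ⟨mem_sbSet.2 ?_, ?_⟩
      · have h1 : ∑ e, (if h : e ∈ A then g ⟨e, h⟩ + 1 else 0)
            = ∑ e ∈ A, (if h : e ∈ A then g ⟨e, h⟩ + 1 else 0) :=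
          (Finset.sum_subset (Finset.subset_univ A) fun e _ he => dif_neg he).symm
        have h2 : ∑ e ∈ A, (if h : e ∈ A then g ⟨e, h⟩ + 1 else 0)
            = ∑ a : ↥A, (g a + 1) := by
          rw [← Finset.sum_coe_sort A]
          exact Finset.sum_congr rfl fun a _ => by simp
        rw [h1, h2, Finset.sum_add_distrib, hg]
        simp only [Finset.sum_const, smul_eq_mul, mul_one, Finset.card_univ, Fintype.card_coe]
        omega
      · ext e
        simp only [Finset.mem_filter, Finset.mem_univ, true_and]
        by_cases he : e ∈ A <;> simp [he]
    case li =>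
      intro f hf
      obtain ⟨hf1, hf2⟩ := Finset.mem_filter.1 hf
      have hpos : ∀ e ∈ A, 1 ≤ f e := fun e he => by
        have : e ∈ univ.filter fun e => 0 < f e := hf2 ▸ he
        exact (Finset.mem_filter.1 this).2
      have h0 : ∀ e ∉ A, f e = 0 := fun e he => by
        by_contra h
        exact he (hf2 ▸ Finset.mem_filter.2 ⟨Finset.mem_univ e, Nat.pos_of_ne_zero h⟩)
      funext e
      by_cases he : e ∈ A
      · simp only [dif_pos he]
        exact Nat.sub_add_cancel (hpos e he)
      · simp only [dif_neg he]
        exact (h0 e he).symm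
    case ri =>
      intro g hg
      funext a
      show (if h : (↑a : α) ∈ A then g ⟨↑a, h⟩ + 1 else 0) - 1 = g a
      rw [dif_pos a.2]
      simp
  rw [key, sbSet_card, Fintype.card_coe, hAA]

private lemma sum_pow_eq (m k : ℕ) (hm : 1 ≤ m) (hk : 1 ≤ k) :
    ∑ f ∈ sbSet α m, ((univ.filter fun e => 0 < f e).card) ^ k
      = ∑ r ∈ Finset.range m,
          (r + 1) ^ k * (Fintype.card α).choose (r + 1) * (m - 1).choose (m - 1 - r) := by
  classical
  set N := Fintype.card α with hN
  set gfun : ℕ → ℕ := fun s => s ^ k * (if s ≤ m then (m - 1).choose (m - s) else 0) with hg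
  have step1 : ∑ f ∈ sbSet α m, ((univ.filter fun e => 0 < f e).card) ^ k
      = ∑ A ∈ (univ : Finset α).powerset,
          ∑ f ∈ (sbSet α m).filter fun f => univ.filter (fun e => 0 < f e) = A,
            ((univ.filter fun e => 0 < f e).card) ^ k :=
    (Finset.sum_fiberwise_of_maps_to (fun f _ => Finset.mem_powerset.2 (Finset.subset_univ _)) _).symm
  have step2 : ∀ A ∈ (univ : Finset α).powerset,
      (∑ f ∈ (sbSet α m).filter fun f => univ.filter (fun e => 0 < f e) = A,
        ((univ.filter fun e => 0 < f e).card) ^ k) = gfun A.card := by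
    intro A _
    have hconst : ∀ f ∈ (sbSet α m).filter fun f => univ.filter (fun e => 0 < f e) = A,
        ((univ.filter fun e => 0 < f e).card) ^ k = A.card ^ k := fun f hf => by
      rw [(Finset.mem_filter.1 hf).2]
    rw [Finset.sum_congr rfl hconst, Finset.sum_const, smul_eq_mul]
    by_cases hAm : A.card ≤ m
    · rw [fib_card m A hAm, hg]
      simp only [if_pos hAm]
      ring
    · have hempty : ((sbSet α m).filter fun f => univ.filter (fun e => 0 < f e) = A) = ∅ := by
        refine Finset.filter_eq_empty_iff.2 fun f hf => ?_
        intro hsupp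
        have h1 : A.card ≤ m := by
          rw [← hsupp, ← mem_sbSet.1 hf]
          exact supp_le
        exact hAm h1
      rw [hempty, hg]
      simp [hAm]
  rw [step1, Finset.sum_congr rfl step2, Finset.sum_powerset_apply_card gfun]
  have hcu : (univ : Finset α).card = N := Finset.card_univ
  rw [hcu]
  -- now reindex
  set T := max N m with hT
  have hzero1 : ∀ s ∈ Finset.range (T + 1), s ∉ Finset.range (N + 1) → N.choose s • gfun s = 0 := by
    intro s _ hs
    have : N < s := by
      by_contra h
      push_neg at h
      exact hs (Finset.mem_range.2 (Nat.lt_succ_of_le h))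
    rw [Nat.choose_eq_zero_of_lt this, zero_smul]
  have e1 : ∑ s ∈ Finset.range (N + 1), N.choose s • gfun s
      = ∑ s ∈ Finset.range (T + 1), N.choose s • gfun s :=
    Finset.sum_subset (Finset.range_subset_range.2 (Nat.succ_le_succ (le_max_left N m))) hzero1
  have e2 : ∑ s ∈ Finset.range (T + 1), N.choose s • gfun s
      = (∑ r ∈ Finset.range T, N.choose (r + 1) • gfun (r + 1)) + N.choose 0 • gfun 0 :=
    Finset.sum_range_succ' _ T
  have hg0 : gfun 0 = 0 := by
    rw [hg]
    simp only
    rw [Nat.zero_pow hk, Nat.zero_mul]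
  have e3 : ∑ r ∈ Finset.range m, N.choose (r + 1) • gfun (r + 1)
      = ∑ r ∈ Finset.range T, N.choose (r + 1) • gfun (r + 1) := by
    refine Finset.sum_subset (Finset.range_subset_range.2 (le_max_right N m)) ?_
    intro r _ hr
    have : ¬ (r + 1 ≤ m) := fun h => hr (Finset.mem_range.2 (Nat.lt_of_succ_le h))
    rw [hg]
    simp only [if_neg this, Nat.mul_zero, smul_zero]
  rw [e1, e2, hg0, smul_zero, add_zero, ← e3]
  refine Finset.sum_congr rfl fun r hr => ?_
  have hrm : r < m := Finset.mem_range.1 hr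
  rw [hg]
  simp only [if_pos (Nat.succ_le_of_lt hrm : r + 1 ≤ m), smul_eq_mul]
  have : m - (r + 1) = m - 1 - r := by rw [Nat.sub_sub, Nat.add_comm]
  rw [this]
  ring

lemma multigraphs_eq (n m : ℕ) : multigraphs n m = sbSet (Fin n × Fin n) m := rfl

/-- The `k`-th moment of the support size of a uniformly random bipartite multigraph
from `B'(n,m)` satisfies `E[Z^k] = (Nm/(N+m−1))·E[(Y+1)^{k−1}]`, where `N = n²` and
`Y` is hypergeometric with parameters `H(N+m−2, N−1, m−1)`, i.e.
`Pr[Y = r] = C(N−1,r)·C(m−1,m−1−r)/C(N+m−2,m−1)`. -/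
theorem moment_suppSize (n m k : ℕ) (hm : 1 ≤ m) (hk : 1 ≤ k) :
    (∑ f ∈ multigraphs n m, (suppSize f : ℝ) ^ k) / ((multigraphs n m).card : ℝ) =
      ((n : ℝ) ^ 2 * (m : ℝ)) / ((n : ℝ) ^ 2 + (m : ℝ) - 1) *
        ∑ r ∈ Finset.range m, ((r : ℝ) + 1) ^ (k - 1) *
          ((((n ^ 2 - 1).choose r : ℝ) * ((m - 1).choose (m - 1 - r) : ℝ)) /
            ((n ^ 2 + m - 2).choose (m - 1) : ℝ)) := by
  by_cases hn : n = 0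
  · subst hn
    have hempty : multigraphs 0 m = ∅ := by
      rw [Finset.eq_empty_iff_forall_notMem]
      intro f hf
      have := mem_sbSet.1 ((multigraphs_eq 0 m) ▸ hf)
      simp at this
      omega
    rw [hempty]
    simp
  -- main case
  have hn1 : 1 ≤ n := Nat.one_le_iff_ne_zero.2 hn
  set N := n ^ 2 with hNdef
  -- basic nat facts, proved early to keep omega's context clean
  have hN1 : 1 ≤ N := Nat.one_le_pow _ _ (Nat.pos_of_ne_zero hn)
  have hmle : m ≤ N + m - 1 := by omega
  have hm1le : m - 1 ≤ N + m - 2 := by omega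
  have c1 : N + m - 2 + 1 = N + m - 1 := by omega
  have c2 : m - 1 + 1 = m := by omega
  have c3 : N - 1 + 1 = N := by omega
  have h1nm : 1 ≤ N + m := by omega
  have e1 : ∀ r : ℕ, (r + 1) * N.choose (r + 1) = N * (N - 1).choose r := by
    intro r
    have h := Nat.add_one_mul_choose_eq (N - 1) r
    rw [c3] at h
    rw [mul_comm]
    exact h.symm
  have e2 : m * (N + m - 1).choose m = (N + m - 1) * (N + m - 2).choose (m - 1) := by
    have h := Nat.add_one_mul_choose_eq (N + m - 2) (m - 1)
    rw [c1, c2] at h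
    rw [mul_comm]
    exact h.symm
  have hcast : ((N + m - 1 : ℕ) : ℝ) = (N : ℝ) + (m : ℝ) - 1 := by
    rw [show N + m - 1 = N + m - 1 from rfl, Nat.cast_sub h1nm]
    push_cast
    ring
  have hD1 : (((N + m - 1).choose m : ℕ) : ℝ) ≠ 0 :=
    Nat.cast_ne_zero.2 (Nat.choose_pos hmle).ne'
  have hD2 : (((N + m - 2).choose (m - 1) : ℕ) : ℝ) ≠ 0 :=
    Nat.cast_ne_zero.2 (Nat.choose_pos hm1le).ne'
  have hden : (N : ℝ) + (m : ℝ) - 1 ≠ 0 := by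
    rw [← hcast]
    exact Nat.cast_ne_zero.2 (by omega)
  have E1 : ∀ r : ℕ, ((r : ℝ) + 1) * (N.choose (r + 1) : ℝ) = (N : ℝ) * ((N - 1).choose r : ℝ) := by
    intro r
    exact_mod_cast congrArg (Nat.cast : ℕ → ℝ) (e1 r)
  have E2 : (m : ℝ) * ((N + m - 1).choose m : ℝ)
      = ((N : ℝ) + (m : ℝ) - 1) * ((N + m - 2).choose (m - 1) : ℝ) := by
    rw [← hcast]
    exact_mod_cast congrArg (Nat.cast : ℕ → ℝ) e2
  have hNR : ((N : ℕ) : ℝ) = (n : ℝ) ^ 2 := by rw [hNdef]; push_cast; ring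
  -- numerator and cardinality
  have hnum : (∑ f ∈ multigraphs n m, (suppSize f : ℝ) ^ k)
      = ((∑ f ∈ sbSet (Fin n × Fin n) m, ((univ.filter fun e => 0 < f e).card) ^ k : ℕ) : ℝ) := by
    rw [Nat.cast_sum, multigraphs_eq]
    exact Finset.sum_congr rfl fun f _ => by rw [Nat.cast_pow]; rfl
  have hNcard : Fintype.card (Fin n × Fin n) = N := by
    simp [hNdef]
    ring
  have hcard : ((multigraphs n m).card : ℝ) = (((N + m - 1).choose m : ℕ) : ℝ) := by
    rw [multigraphs_eq, sbSet_card, hNcard]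
  rw [hnum, hcard, sum_pow_eq m k hm hk, hNcard]
  rw [Nat.cast_sum]
  rw [Finset.sum_div, Finset.mul_sum]
  refine Finset.sum_congr rfl fun r hr => ?_
  have hkk : ((r : ℝ) + 1) ^ k = ((r : ℝ) + 1) ^ (k - 1) * ((r : ℝ) + 1) := by
    conv_lhs => rw [show k = k - 1 + 1 from by omega]
    rw [pow_succ]
  push_cast
  rw [← hNR, hkk]
  field_simp
  linear_combination
      ((((m-1).choose (m-1-r) : ℕ) : ℝ) * ((N:ℝ)+(m:ℝ)-1)
        * (((N+m-2).choose (m-1) : ℕ) : ℝ)) * E1 r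
    - ((((m-1).choose (m-1-r) : ℕ) : ℝ) * (N:ℝ)
        * (((N-1).choose r : ℕ) : ℝ)) * E2
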